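/- arXiv:1810.04210 — 4 statements merged into one kernel-verified Lean document; each statement's English description precedes it below -/
import Mathlib

section
/- Assume that μ is a finite measure. If there exists B ∈ 𝓑 with μ(B) > 0 and liminf_{n→∞} μ(f^n(B)) = 0, then there exists a measurable set W ⊆ B with μ(W) > 0 such that liminf_{n→∞} μ(f^{-n}(W)) = 0 and liminf_{n→∞} μ(f^n(W)) = 0. -/
open MeasureTheory Filter Set Topology
open scoped ENNReal

noncomputable section

/-- A continuous self-map `g` of a metric space is *Li-Yorke chaotic* if there is an
uncountable set `S` (a scrambled set) such that every pair of distinct points `x, y ∈ S`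
satisfies `liminf dist (gⁿ x) (gⁿ y) = 0` and `limsup dist (gⁿ x) (gⁿ y) > 0`. -/
def LiYorkeChaotic {M : Type*} [PseudoMetricSpace M] (g : M → M) : Prop :=
  ∃ S : Set M, ¬ S.Countable ∧ ∀ x ∈ S, ∀ y ∈ S, x ≠ y →
    (∀ ε > 0, ∃ᶠ n in atTop, dist (g^[n] x) (g^[n] y) < ε) ∧
    (∃ ε > 0, ∃ᶠ n in atTop, ε < dist (g^[n] x) (g^[n] y))

/-- **(LY4) ⇒ (LY5) (measure-theoretic form).** Assume `μ` finite. If there is a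
measurable `B` with `μ(B) > 0` and `liminf μ(f^n(B)) = 0`, then there is a measurable
`W ⊆ B` with `μ(W) > 0`, `liminf μ(f^{-n}(W)) = 0` and `liminf μ(f^n(W)) = 0`. -/
theorem exists_subset_liminf_preimage_image_zero
    {X : Type*} [MeasurableSpace X] (μ : Measure X) (hX : μ Set.univ ≠ 0)
    [IsFiniteMeasure μ]
    (f : X → X) (hf : Measurable f)
    (hfim : ∀ B : Set X, MeasurableSet B → MeasurableSet (f '' B))
    (c : ℝ≥0∞) (hc : 0 < c)
    (hcf : ∀ B : Set X, MeasurableSet B → c * μ B ≤ μ (f '' B))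
    (B : Set X) (hB : MeasurableSet B) (hB0 : 0 < μ B)
    (h : atTop.liminf (fun n : ℕ => μ (f^[n] '' B)) = 0) :
    ∃ W : Set X, W ⊆ B ∧ MeasurableSet W ∧ 0 < μ W ∧
      atTop.liminf (fun n : ℕ => μ (f^[n] ⁻¹' W)) = 0 ∧
      atTop.liminf (fun n : ℕ => μ (f^[n] '' W)) = 0 := by
  
  -- measurability of images under iterates
  have himg : ∀ (m : ℕ) (A : Set X), MeasurableSet A → MeasurableSet (f^[m] '' A) := by
    intro m
    induction m with
    | zero => intro A hA; simpa using hA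
    | succ m ih =>
      intro A hA
      rw [Function.iterate_succ', Set.image_comp]
      exact hfim _ (ih A hA)
  -- growth of images
  have hgrow : ∀ (m : ℕ) (A : Set X), MeasurableSet A → c ^ m * μ A ≤ μ (f^[m] '' A) := by
    intro m
    induction m with
    | zero => intro A hA; simp
    | succ m ih =>
      intro A hA
      calc c ^ (m + 1) * μ A = c * (c ^ m * μ A) := by ring
        _ ≤ c * μ (f^[m] '' A) := mul_le_mul_right (ih A hA) c
        _ ≤ μ (f '' (f^[m] '' A)) := hcf _ (himg m A hA)
        _ = μ (f^[m + 1] '' A) := by rw [Function.iterate_succ', Set.image_comp]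
  -- preimage bound
  have hpre : ∀ (m : ℕ) (S : Set X), MeasurableSet S → c ^ m * μ (f^[m] ⁻¹' S) ≤ μ S := by
    intro m S hS
    calc c ^ m * μ (f^[m] ⁻¹' S) ≤ μ (f^[m] '' (f^[m] ⁻¹' S)) :=
          hgrow m _ ((hf.iterate m) hS)
      _ ≤ μ S := measure_mono (Set.image_preimage_subset _ _)
  have hBfin : μ B ≠ ∞ := (measure_lt_top μ B).ne
  -- WLOG c < 1
  rcases lt_or_ge c 1 with hc1 | hc1
  swap
  · exfalso
    have hlow : ∀ m : ℕ, μ B ≤ μ (f^[m] '' B) := by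
      intro m
      calc μ B = 1 * μ B := (one_mul _).symm
        _ ≤ c ^ m * μ B := by
            refine mul_le_mul_left ?_ _
            calc (1 : ℝ≥0∞) = 1 ^ m := (one_pow m).symm
              _ ≤ c ^ m := pow_le_pow_left₀ (by norm_num) hc1 m
        _ ≤ μ (f^[m] '' B) := hgrow m B hB
    have : μ B ≤ atTop.liminf (fun n : ℕ => μ (f^[n] '' B)) :=
      le_liminf_of_le (by isBoundedDefault) (Filter.Eventually.of_forall hlow)
    rw [h] at this
    exact hB0.ne' (le_antisymm this zero_le)
  have hcne0 : c ≠ 0 := hc.ne'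
  have hcnetop : c ≠ ∞ := ne_top_of_lt hc1
  have hpow0 : ∀ m : ℕ, c ^ m ≠ 0 := fun m => pow_ne_zero m hcne0
  have hpowtop : ∀ m : ℕ, c ^ m ≠ ∞ := fun m => ENNReal.pow_ne_top hcnetop
  -- selection of good times
  have hex : ∀ (k m : ℕ), ∃ N, m < N ∧
      μ (f^[N] '' B) < c ^ m * (μ B / 2 ^ (k + 2) / ((m : ℝ≥0∞) + 1)) := by
    intro k m
    have hδ : 0 < c ^ m * (μ B / 2 ^ (k + 2) / ((m : ℝ≥0∞) + 1)) := by
      refine ENNReal.mul_pos (hpow0 m) ?_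
      refine (ENNReal.div_pos ?_ ?_).ne'
      · exact (ENNReal.div_pos hB0.ne' (ENNReal.pow_ne_top (by norm_num))).ne'
      · exact (ENNReal.add_lt_top.2 ⟨ENNReal.natCast_lt_top m, ENNReal.one_lt_top⟩).ne
    have hfreq : ∃ᶠ N in atTop, μ (f^[N] '' B) <
        c ^ m * (μ B / 2 ^ (k + 2) / ((m : ℝ≥0∞) + 1)) :=
      frequently_lt_of_liminf_lt (by isBoundedDefault) (by rw [h]; exact hδ)
    obtain ⟨N, h1, h2⟩ := (hfreq.and_eventually (eventually_gt_atTop m)).exists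
    exact ⟨N, h2, h1⟩
  choose g hg1 hg2 using hex
  obtain ⟨n, hn0, hnsucc⟩ : ∃ n : ℕ → ℕ, n 0 = 0 ∧ ∀ k, n (k + 1) = g k (n k) :=
    ⟨fun k => Nat.rec (motive := fun _ => ℕ) 0 (fun k ih => g k ih) k, rfl, fun k => rfl⟩
  have hmono : StrictMono n := strictMono_nat_of_lt_succ fun k => by
    rw [hnsucc]; exact hg1 k (n k)
  have hsmall : ∀ k, μ (f^[n (k + 1)] '' B) <
      c ^ (n k) * (μ B / 2 ^ (k + 2) / ((n k : ℝ≥0∞) + 1)) := fun k => by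
    rw [hnsucc]; exact hg2 k (n k)
  -- the removed set and W
  set R : Set X := ⋃ k : ℕ, ⋃ i ∈ Finset.range (n k + 1), f^[i] ⁻¹' (f^[n (k + 1)] '' B) with hR
  set W : Set X := B \ R with hW
  have hWsub : W ⊆ B := Set.diff_subset
  have hWmeas : MeasurableSet W := by
    refine hB.diff (MeasurableSet.iUnion fun k => ?_)
    exact MeasurableSet.biUnion (Finset.range (n k + 1)).countable_toSet
      (fun i _ => (hf.iterate i) (himg _ _ hB))
  -- per-term measure bound
  have hterm : ∀ k i, i ≤ n k →
      μ (f^[i] ⁻¹' (f^[n (k + 1)] '' B)) ≤ μ B / 2 ^ (k + 2) / ((n k : ℝ≥0∞) + 1) := by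
    intro k i hi
    have h1 : c ^ i * μ (f^[i] ⁻¹' (f^[n (k + 1)] '' B)) ≤ μ (f^[n (k + 1)] '' B) :=
      hpre i _ (himg _ _ hB)
    have h2 : μ (f^[n (k + 1)] '' B) ≤ c ^ i * (μ B / 2 ^ (k + 2) / ((n k : ℝ≥0∞) + 1)) := by
      refine (hsmall k).le.trans (mul_le_mul_left ?_ _)
      exact pow_le_pow_of_le_one zero_le hc1.le hi
    exact (ENNReal.mul_le_mul_iff_right (hpow0 i) (hpowtop i)).mp (h1.trans h2)
  -- measure of R
  have hRmeas : μ R < μ B := by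
    have hRle : μ R ≤ ∑' k : ℕ, μ B / 2 ^ (k + 2) := by
      rw [hR]
      refine (measure_iUnion_le _).trans (ENNReal.tsum_le_tsum fun k => ?_)
      calc μ (⋃ i ∈ Finset.range (n k + 1), f^[i] ⁻¹' (f^[n (k + 1)] '' B))
          ≤ ∑ i ∈ Finset.range (n k + 1), μ (f^[i] ⁻¹' (f^[n (k + 1)] '' B)) :=
            measure_biUnion_finset_le _ _
        _ ≤ ∑ i ∈ Finset.range (n k + 1), μ B / 2 ^ (k + 2) / ((n k : ℝ≥0∞) + 1) := by
            refine Finset.sum_le_sum fun i hi => hterm k i ?_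
            exact Nat.lt_succ_iff.mp (Finset.mem_range.mp hi)
        _ = ((n k : ℝ≥0∞) + 1) * (μ B / 2 ^ (k + 2) / ((n k : ℝ≥0∞) + 1)) := by
            rw [Finset.sum_const, Finset.card_range, nsmul_eq_mul]
            push_cast
            ring
        _ ≤ μ B / 2 ^ (k + 2) := ENNReal.mul_div_le
    have hgeom : ∑' k : ℕ, μ B / 2 ^ (k + 2) = μ B / 2 := by
      have h42 : (4 : ℝ≥0∞)⁻¹ * 2 = 2⁻¹ := by
        have h22 : ((2 : ℝ≥0∞) * 2)⁻¹ = 2⁻¹ * 2⁻¹ :=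
          ENNReal.mul_inv (Or.inl (by norm_num)) (Or.inl (by norm_num))
        rw [show (4 : ℝ≥0∞) = 2 * 2 by norm_num, h22, mul_assoc,
          ENNReal.inv_mul_cancel (by norm_num) (by norm_num), mul_one]
      have h4 : (2 : ℝ≥0∞)⁻¹ ^ 2 = 4⁻¹ := by
        rw [← ENNReal.inv_pow]; norm_num
      have h2 : ∀ k : ℕ, μ B / 2 ^ (k + 2) = μ B * 4⁻¹ * 2⁻¹ ^ k := by
        intro k
        rw [div_eq_mul_inv, ENNReal.inv_pow, pow_add, h4, mul_comm ((2 : ℝ≥0∞)⁻¹ ^ k),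
          ← mul_assoc]
      rw [tsum_congr h2, ENNReal.tsum_mul_left, ENNReal.tsum_geometric,
        ENNReal.one_sub_inv_two, inv_inv, mul_assoc, h42, ← div_eq_mul_inv]
    calc μ R ≤ μ B / 2 := hRle.trans_eq hgeom
      _ < μ B := ENNReal.half_lt_self hB0.ne' hBfin
  -- μ W > 0
  have hWpos : 0 < μ W := by
    rcases eq_or_ne (μ W) 0 with h0 | h0
    · exfalso
      have : μ B ≤ μ R := by
        calc μ B ≤ μ (W ∪ R) := measure_mono (fun x hx => by
              by_cases hxR : x ∈ R
              · exact Or.inr hxR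
              · exact Or.inl ⟨hx, hxR⟩)
          _ ≤ μ W + μ R := measure_union_le _ _
          _ = μ R := by rw [h0, zero_add]
      exact absurd (this.trans_lt hRmeas) (lt_irrefl _)
    · exact pos_iff_ne_zero.mpr h0
  -- pairwise disjointness of the preimages at times n (j+1)
  have hWnot : ∀ y ∈ W, ∀ k i, i ≤ n k → f^[i] y ∉ f^[n (k + 1)] '' B := by
    intro y hy k i hi hmem
    refine hy.2 ?_
    rw [hR]
    exact Set.mem_iUnion.2 ⟨k, Set.mem_biUnion (Finset.mem_range.2 (Nat.lt_succ_of_le hi)) hmem⟩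
  have hdisj : Pairwise (Function.onFun Disjoint fun j : ℕ => f^[n (j + 1)] ⁻¹' W) := by
    have key : ∀ j k : ℕ, j < k → Disjoint (f^[n (j + 1)] ⁻¹' W) (f^[n (k + 1)] ⁻¹' W) := by
      intro j k hjk
      rw [Set.disjoint_left]
      intro x hxj hxk
      have h1 : f^[n (k + 1)] (f^[n (j + 1)] x) ∈ f^[n (k + 1)] '' B :=
        Set.mem_image_of_mem _ (hWsub hxj)
      have h2 : f^[n (j + 1)] (f^[n (k + 1)] x) ∉ f^[n (k + 1)] '' B :=
        hWnot _ hxk k (n (j + 1)) (hmono.monotone (Nat.succ_le_of_lt hjk))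
      apply h2
      rw [← Function.iterate_add_apply, Nat.add_comm (n (j + 1)) (n (k + 1)),
        Function.iterate_add_apply]
      exact h1
    intro j k hjk
    rcases hjk.lt_or_gt with h' | h'
    · exact key j k h'
    · exact (key k j h').symm
  -- measures of the disjoint preimages tend to 0
  have hsum : ∑' j : ℕ, μ (f^[n (j + 1)] ⁻¹' W) ≠ ∞ := by
    rw [← measure_iUnion hdisj (fun j => (hf.iterate _) hWmeas)]
    exact (measure_lt_top μ _).ne
  have htend : Tendsto (fun j : ℕ => μ (f^[n (j + 1)] ⁻¹' W)) atTop (𝓝 0) := by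
    have := ENNReal.tendsto_cofinite_zero_of_tsum_ne_top hsum
    rwa [Nat.cofinite_eq_atTop] at this
  have hphi : Tendsto (fun j : ℕ => n (j + 1)) atTop atTop :=
    (hmono.comp fun a b hab => Nat.succ_lt_succ hab).tendsto_atTop
  -- liminf of preimages is 0
  have hlimpre : atTop.liminf (fun m : ℕ => μ (f^[m] ⁻¹' W)) = 0 := by
    refine le_antisymm ?_ zero_le
    refine ENNReal.le_of_forall_pos_le_add fun ε hε _ => ?_
    rw [zero_add]
    refine liminf_le_of_frequently_le ?_ (by isBoundedDefault)
    rw [frequently_atTop]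
    intro N
    have h1 : ∀ᶠ j in atTop, μ (f^[n (j + 1)] ⁻¹' W) < (ε : ℝ≥0∞) :=
      htend.eventually_lt_const (by exact_mod_cast hε)
    have h2 : ∀ᶠ j in atTop, N ≤ n (j + 1) := hphi.eventually_ge_atTop N
    obtain ⟨j, hj1, hj2⟩ := (h1.and h2).exists
    exact ⟨n (j + 1), hj2, hj1.le⟩
  -- liminf of images is 0
  have hlimim : atTop.liminf (fun m : ℕ => μ (f^[m] '' W)) = 0 := by
    refine le_antisymm ?_ zero_le
    calc atTop.liminf (fun m : ℕ => μ (f^[m] '' W))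
        ≤ atTop.liminf (fun m : ℕ => μ (f^[m] '' B)) := by
          refine liminf_le_liminf (Filter.Eventually.of_forall fun m => ?_)
          exact measure_mono (Set.image_mono hWsub)
      _ = 0 := h
  exact ⟨W, hWsub, hWmeas, hWpos, hlimpre, hlimim⟩
end
end

section
/- Let X = ℤ, 𝓑 = 𝒫(ℤ), f : i ↦ i+1, and let μ be the σ-finite measure on 𝒫(ℤ) determined by μ({i}) = 2^i for i ≤ −1 and μ({i}) = 1 for i ≥ 0. Then μ(B) ≤ μ(f(B)) ≤ 2·μ(B) for every B ⊆ ℤ (so T_f is a well-defined continuous linear operator on L^p(ℤ,𝒫(ℤ),μ)), and lim_{n→∞} ‖T_f^n φ‖ = 0 for every φ ∈ L^p(ℤ,𝒫(ℤ),μ). In particular, T_f is not Li-Yorke chaotic, even though the set B = {0} satisfies μ(B) > 0 and lim_{n→∞} μ(f^{-n}(B)) = 0. -/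
open MeasureTheory Filter Set Topology
open scoped ENNReal

noncomputable section

section helpers
variable (μ : Measure ℤ)
  (hμ : ∀ i : ℤ, μ {i} = if i ≤ -1 then (2 : ℝ≥0∞) ^ i else 1)

theorem two_zpow_tendsto' (j : ℤ) : Tendsto (fun n : ℕ => (2:ℝ≥0∞) ^ (j - n)) atTop (𝓝 0) := by
  have h2 : (2:ℝ≥0∞) ≠ 0 := by norm_num
  have h2' : (2:ℝ≥0∞) ≠ ⊤ := by norm_num
  have key : ∀ n : ℕ, (2:ℝ≥0∞) ^ (j - n) = 2 ^ j * (2⁻¹) ^ n := by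
    intro n
    rw [sub_eq_add_neg, ENNReal.zpow_add h2 h2']
    congr 1
    rw [ENNReal.zpow_neg, zpow_natCast, ← ENNReal.inv_pow]
  simp only [key]
  rw [show (0:ℝ≥0∞) = 2^j * 0 by simp]
  exact ENNReal.Tendsto.const_mul (ENNReal.tendsto_pow_atTop_nhds_zero_of_lt_one (by norm_num))
    (Or.inr (ENNReal.zpow_lt_top h2 h2' j).ne)

include hμ in
theorem singleton_pos' : ∀ i : ℤ, 0 < μ {i} := by
  intro i
  rw [hμ i]
  split
  · exact ENNReal.zpow_pos (by norm_num) (by norm_num) i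
  · norm_num

include hμ in
theorem ae_to_all' {P : ℤ → Prop} (h : ∀ᵐ i ∂μ, P i) : ∀ i, P i := by
  intro i
  by_contra hc
  have h1 : μ {j | ¬ P j} = 0 := h
  have h2 : μ {i} ≤ μ {j | ¬ P j} := measure_mono (by simpa using hc)
  exact absurd (h2.trans_eq h1) (singleton_pos' μ hμ i).not_ge

include hμ in
theorem step' : ∀ i : ℤ, μ {i} ≤ μ {i+1} ∧ μ {i+1} ≤ 2 * μ {i} := by
  intro i
  rw [hμ i, hμ (i+1)]
  rcases le_or_gt i (-2) with h | h
  · rw [if_pos (by omega), if_pos (by omega),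
      show (2:ℝ≥0∞)^(i+1) = 2^i * 2 by
        rw [ENNReal.zpow_add (by norm_num) (by norm_num), zpow_one]]
    constructor
    · exact le_mul_of_one_le_right zero_le (by norm_num)
    · rw [mul_comm]
  · rcases le_or_gt i (-1) with h' | h'
    · have : i = -1 := by omega
      subst this
      norm_num
      constructor
      · rw [ENNReal.zpow_neg, zpow_one]
        exact ENNReal.inv_le_one.mpr (by norm_num)
      · rw [ENNReal.zpow_neg, zpow_one]
        rw [ENNReal.mul_inv_cancel (by norm_num) (by norm_num)]
    · rw [if_neg (by omega), if_neg (by omega)]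
      exact ⟨le_rfl, le_mul_of_one_le_left zero_le (by norm_num)⟩

include hμ in
theorem mono_sub' : ∀ (j : ℤ) (n : ℕ), μ {j - n} ≤ μ {j} := by
  intro j n
  induction n with
  | zero => simp
  | succ n ih =>
    refine le_trans ?_ ih
    have := (step' μ hμ (j - (n+1))).1
    simpa [show j - (n+1) + 1 = j - n by ring] using this

theorem tsum_sing' (s : Set ℤ) : (∑' b : s, μ {(b:ℤ)}) = μ s := by
  simpa using tsum_measure_preimage_singleton (μ := μ) (s.to_countable) (f := id)
    (fun y _ => measurableSet_preimage measurable_id (measurableSet_singleton y))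

end helpers

/-- **Example (the finiteness of `μ` is essential).** Let `X = ℤ`, `f : i ↦ i + 1`, and
let `μ` be the measure on `𝒫(ℤ)` determined by `μ({i}) = 2^i` for `i ≤ -1` and
`μ({i}) = 1` for `i ≥ 0`. Then `μ(B) ≤ μ(f(B)) ≤ 2·μ(B)` for every `B ⊆ ℤ`,
every orbit of `T_f` tends to `0` in norm, and in particular `T_f` is not Li-Yorke
chaotic, even though `B = {0}` satisfies `μ(B) > 0` and `μ(f^{-n}(B)) → 0`. -/
theorem shift_orbits_null_not_liYorke
    (μ : Measure ℤ)
    (hμ : ∀ i : ℤ, μ {i} = if i ≤ -1 then (2 : ℝ≥0∞) ^ i else 1)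
    (p : ℝ≥0∞) [Fact (1 ≤ p)] (hp : p ≠ ∞)
    (T : Lp ℝ p μ →L[ℝ] Lp ℝ p μ)
    (hT : ∀ φ : Lp ℝ p μ, ⇑(T φ) =ᵐ[μ] fun i => φ (i + 1)) :
    (∀ B : Set ℤ, μ B ≤ μ ((fun i : ℤ => i + 1) '' B) ∧
      μ ((fun i : ℤ => i + 1) '' B) ≤ 2 * μ B) ∧
    (∀ φ : Lp ℝ p μ, Tendsto (fun n : ℕ => ‖(T ^ n) φ‖) atTop (𝓝 0)) ∧
    ¬ LiYorkeChaotic (⇑T) ∧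
    (0 < μ {(0 : ℤ)} ∧
      Tendsto (fun n : ℕ => μ ((fun i : ℤ => i + 1)^[n] ⁻¹' {(0 : ℤ)}))
        atTop (𝓝 0)) := by
  have hp0 : p ≠ 0 := by
    intro h
    have := (Fact.out : (1:ℝ≥0∞) ≤ p)
    simp [h] at this
  have hpr : 0 < p.toReal := ENNReal.toReal_pos hp0 hp
  have hinj : Function.Injective (fun i : ℤ => i + 1) := fun a b h => by simpa using h
  -- Part 1
  have part1 : ∀ B : Set ℤ, μ B ≤ μ ((fun i : ℤ => i + 1) '' B) ∧
      μ ((fun i : ℤ => i + 1) '' B) ≤ 2 * μ B := by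
    intro B
    have himg : μ ((fun i : ℤ => i + 1) '' B) = ∑' b : B, μ {(b:ℤ) + 1} := by
      rw [← tsum_sing' μ ((fun i : ℤ => i + 1) '' B),
        ← (Equiv.Set.imageOfInjOn _ B (hinj.injOn)).tsum_eq (fun b => μ {(b:ℤ)})]
      rfl
    have hB : μ B = ∑' b : B, μ {(b:ℤ)} := (tsum_sing' μ B).symm
    constructor
    · rw [himg, hB]
      exact ENNReal.tsum_le_tsum (fun b => (step' μ hμ b).1)
    · rw [himg, hB, ← ENNReal.tsum_mul_left]
      exact ENNReal.tsum_le_tsum (fun b => (step' μ hμ b).2)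
  have part2 : ∀ φ : Lp ℝ p μ, Tendsto (fun n : ℕ => ‖(T ^ n) φ‖) atTop (𝓝 0) := by
    intro φ
    -- pointwise formula for iterates
    have hpt : ∀ n : ℕ, ∀ i : ℤ, ((T ^ n) φ : ℤ → ℝ) i = φ (i + n) := by
      intro n
      induction n with
      | zero =>
        intro i
        simp [pow_zero, ContinuousLinearMap.one_apply]
      | succ n ih =>
        have hrw : (T ^ (n+1)) φ = T ((T ^ n) φ) := by
          rw [pow_succ']
          rfl
        have hae := ae_to_all' μ hμ (hT ((T ^ n) φ))
        intro i
        rw [hrw, hae i]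
        show ((T ^ n) φ : ℤ → ℝ) (i + 1) = _
        rw [ih (i + 1)]
        congr 1
        push_cast
        ring
    -- norm formula
    set pr := p.toReal with hprdef
    have hnorm : ∀ n : ℕ, eLpNorm ((T ^ n) φ) p μ
        = (∑' j : ℤ, ((‖φ j‖₊ : ℝ≥0∞)) ^ pr * μ {j - (n:ℤ)}) ^ (1 / pr) := by
      intro n
      rw [eLpNorm_eq_lintegral_rpow_enorm_toReal hp0 hp]
      congr 1
      have : ∀ i : ℤ, ((‖((T ^ n) φ : ℤ → ℝ) i‖₊ : ℝ≥0∞)) ^ pr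
          = ((‖φ (i + (n:ℤ))‖₊ : ℝ≥0∞)) ^ pr := by
        intro i; rw [hpt n i]
      rw [lintegral_congr (f := fun x => ‖((T ^ n) φ : ℤ → ℝ) x‖ₑ ^ p.toReal) this, lintegral_countable']
      rw [← (Equiv.addRight (n:ℤ)).tsum_eq
        (fun j => ((‖φ j‖₊ : ℝ≥0∞)) ^ pr * μ {j - (n:ℤ)})]
      simp [Equiv.coe_addRight]
    -- the sum tends to zero
    have hsum : Tendsto (fun n : ℕ => ∑' j : ℤ, ((‖φ j‖₊ : ℝ≥0∞)) ^ pr * μ {j - (n:ℤ)})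
        atTop (𝓝 0) := by
      have hrepr : ∀ n : ℕ, (∑' j : ℤ, ((‖φ j‖₊ : ℝ≥0∞)) ^ pr * μ {j - (n:ℤ)})
          = ∫⁻ j, ((‖φ j‖₊ : ℝ≥0∞)) ^ pr * μ {j - (n:ℤ)} ∂(Measure.count) := by
        intro n; rw [lintegral_count]
      simp only [hrepr]
      have h0 : (0:ℝ≥0∞) = ∫⁻ _, (0:ℝ≥0∞) ∂(Measure.count (α := ℤ)) := by simp
      rw [h0]
      refine tendsto_lintegral_of_dominated_convergence
        (fun j => ((‖φ j‖₊ : ℝ≥0∞)) ^ pr * μ {j}) (fun n => measurable_of_countable _) ?_ ?_ ?_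
      · intro n
        exact Eventually.of_forall fun j =>
          mul_le_mul_right (mono_sub' μ hμ j n) _
      · rw [lintegral_count, ← lintegral_countable']
        exact (lintegral_rpow_enorm_lt_top_of_eLpNorm_lt_top hp0 hp (Lp.eLpNorm_lt_top φ)).ne
      · refine Eventually.of_forall fun j => ?_
        have hc : ((‖φ j‖₊ : ℝ≥0∞)) ^ pr ≠ ⊤ :=
          ENNReal.rpow_ne_top_of_nonneg hpr.le ENNReal.coe_ne_top
        have : Tendsto (fun n : ℕ => ((‖φ j‖₊ : ℝ≥0∞)) ^ pr * (2:ℝ≥0∞) ^ (j - (n:ℤ)))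
            atTop (𝓝 0) := by
          rw [show (0:ℝ≥0∞) = ((‖φ j‖₊ : ℝ≥0∞)) ^ pr * 0 by simp]
          exact ENNReal.Tendsto.const_mul (two_zpow_tendsto' j) (Or.inr hc)
        refine Tendsto.congr' ?_ this
        filter_upwards [eventually_ge_atTop (j.toNat + 1)] with n hn
        rw [hμ, if_pos (by omega)]
    -- conclude
    have help : Tendsto (fun n : ℕ => eLpNorm ((T ^ n) φ) p μ) atTop (𝓝 0) := by
      simp only [hnorm]
      have := hsum.ennrpow_const (1 / pr)
      rwa [ENNReal.zero_rpow_of_pos (by positivity)] at this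
    have := (ENNReal.tendsto_toReal (by norm_num : (0:ℝ≥0∞) ≠ ⊤)).comp help
    simp only [ENNReal.toReal_zero] at this
    refine this.congr fun n => ?_
    rw [Function.comp_apply, Lp.norm_def]
  refine ⟨part1, part2, ?_, ?_, ?_⟩
  · -- not Li-Yorke chaotic
    rintro ⟨S, hS, hspec⟩
    have hnt : S.Nontrivial := by
      by_contra h
      exact hS ((not_nontrivial_iff.mp h).countable)
    obtain ⟨x, hx, y, hy, hxy⟩ := hnt
    obtain ⟨ε, hε, hfreq⟩ := (hspec x hx y hy hxy).2
    have hdist : Tendsto (fun n : ℕ => dist ((⇑T)^[n] x) ((⇑T)^[n] y)) atTop (𝓝 0) := by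
      have heq : ∀ n : ℕ, dist ((⇑T)^[n] x) ((⇑T)^[n] y) = ‖(T ^ n) (x - y)‖ := by
        intro n
        rw [← FunLike.coe_pow_eq_iterate, ← Function.comp_apply (f := ⇑(T^n))]
        rw [dist_eq_norm, ← map_sub]
        rfl
      simp only [heq]
      exact part2 (x - y)
    have hev : ∀ᶠ n in atTop, dist ((⇑T)^[n] x) ((⇑T)^[n] y) < ε :=
      hdist.eventually (gt_mem_nhds hε)
    obtain ⟨n, h1, h2⟩ := (hfreq.and_eventually hev).exists
    exact absurd h2 (not_lt.mpr h1.le)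
  · exact singleton_pos' μ hμ 0
  · -- part 4 tendsto
    have hit : ∀ n : ℕ, ((fun i : ℤ => i + 1)^[n] ⁻¹' {(0:ℤ)}) = {-(n:ℤ)} := by
      intro n
      have h1 : (fun i : ℤ => i + 1)^[n] = fun i : ℤ => i + (n:ℤ) := by
        induction n with
        | zero => funext i; simp
        | succ n ih => funext i; rw [Function.iterate_succ_apply', ih]; push_cast; ring
      rw [h1]
      ext i
      simp only [mem_preimage, mem_singleton_iff]
      omega
    refine Tendsto.congr' ?_ (two_zpow_tendsto' 0)
    filter_upwards [eventually_ge_atTop 1] with n hn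
    rw [hit n, hμ, if_pos (by omega)]
    norm_num
end
end

section
/- Let X = {i ∈ ℕ : i ≥ 1}, 𝓑 = 𝒫(X), let μ be the finite measure determined by μ({i}) = 2^{-i}, and let f : X → X be the (non-injective, surjective) map f(i) = i−1 for i ≥ 2 and f(1) = 1. Then (1/2)·μ(B) ≤ μ(f(B)) ≤ 2·μ(B) for every B ⊆ X (so T_f is a well-defined continuous linear operator on L^p(X,𝒫(X),μ)), and T_f admits no semi-irregular vector: for every φ ∈ L^p(X,𝒫(X),μ), if φ(1) ≠ 0 then ‖T_f^n φ‖^p ≥ (1/2)·|φ(1)|^p for all n ≥ 1, while if φ(1) = 0 then ‖T_f^n φ‖ → 0. In particular T_f is not Li-Yorke chaotic, even though the set B = {2} satisfies μ(B) > 0 and lim_{n→∞} μ(f^{-n}(B)) = 0. -/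
open MeasureTheory Filter Set Topology
open scoped ENNReal

noncomputable section

/-- **Example (the injectivity of `f` is essential).** Let `X = {i ∈ ℕ : i ≥ 1}`, let `μ`
be the finite measure with `μ({i}) = 2^{-i}`, and let `f(i) = i - 1` for `i ≥ 2`,
`f(1) = 1`. Then `(1/2)·μ(B) ≤ μ(f(B)) ≤ 2·μ(B)` for every `B`, `T_f` admits no
semi-irregular vector (if `φ(1) ≠ 0` then `‖T_f^n φ‖^p ≥ (1/2)·|φ(1)|^p` for all `n ≥ 1`,
and if `φ(1) = 0` then `‖T_f^n φ‖ → 0`), and in particular `T_f` is not Li-Yorke chaotic,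
even though `B = {2}` satisfies `μ(B) > 0` and `μ(f^{-n}(B)) → 0`. -/
theorem noninjective_example_not_liYorke
    (μ : Measure {i : ℕ // 1 ≤ i})
    (hμ : ∀ x : {i : ℕ // 1 ≤ i}, μ {x} = (2 : ℝ≥0∞) ^ (-(x : ℕ) : ℤ))
    (f : {i : ℕ // 1 ≤ i} → {i : ℕ // 1 ≤ i})
    (hf : ∀ x : {i : ℕ // 1 ≤ i}, (f x : ℕ) = if 2 ≤ (x : ℕ) then (x : ℕ) - 1 else 1)
    (p : ℝ≥0∞) [Fact (1 ≤ p)] (hp : p ≠ ∞)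
    (T : Lp ℝ p μ →L[ℝ] Lp ℝ p μ)
    (hT : ∀ φ : Lp ℝ p μ, ⇑(T φ) =ᵐ[μ] fun x => φ (f x)) :
    (∀ B : Set {i : ℕ // 1 ≤ i}, μ B / 2 ≤ μ (f '' B) ∧ μ (f '' B) ≤ 2 * μ B) ∧
    (∀ φ : Lp ℝ p μ,
      (φ (⟨1, le_refl 1⟩ : {i : ℕ // 1 ≤ i}) ≠ 0 →
        ∀ n : ℕ, 1 ≤ n →
          (1 / 2) * |φ (⟨1, le_refl 1⟩ : {i : ℕ // 1 ≤ i})| ^ p.toReal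
            ≤ ‖(T ^ n) φ‖ ^ p.toReal) ∧
      (φ (⟨1, le_refl 1⟩ : {i : ℕ // 1 ≤ i}) = 0 →
        Tendsto (fun n : ℕ => ‖(T ^ n) φ‖) atTop (𝓝 0))) ∧
    (¬ ∃ φ : Lp ℝ p μ,
      (∀ ε > (0 : ℝ), ∃ᶠ n in atTop, ‖(T ^ n) φ‖ < ε) ∧
      (∃ ε > (0 : ℝ), ∃ᶠ n in atTop, ε < ‖(T ^ n) φ‖)) ∧
    ¬ LiYorkeChaotic (⇑T) ∧
    (0 < μ {(⟨2, one_le_two⟩ : {i : ℕ // 1 ≤ i})} ∧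
      Tendsto (fun n : ℕ => μ (f^[n] ⁻¹' {(⟨2, one_le_two⟩ : {i : ℕ // 1 ≤ i})}))
        atTop (𝓝 0)) := by
  have h2 : (2 : ℝ≥0∞) ≠ 0 := two_ne_zero
  have h2t : (2 : ℝ≥0∞) ≠ ∞ := ENNReal.ofNat_ne_top
  have hp0 : p ≠ 0 := by
    have h1 : (1 : ℝ≥0∞) ≤ p := Fact.out
    intro h; rw [h] at h1; simp at h1
  have hpt : 0 < p.toReal := ENNReal.toReal_pos hp0 hp
  have hpos : ∀ x : {i : ℕ // 1 ≤ i}, 0 < μ {x} := fun x => by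
    rw [hμ]; exact ENNReal.zpow_pos h2 h2t _
  -- a.e. equality is equality
  have hae : ∀ g h : {i : ℕ // 1 ≤ i} → ℝ, g =ᵐ[μ] h → g = h := by
    intro g h hgh
    funext x
    by_contra hne
    have h0 : μ {a | ¬ g a = h a} = 0 := ae_iff.mp hgh
    have hx0 : μ {x} = 0 := measure_mono_null
      (by intro y hy; simp only [Set.mem_singleton_iff] at hy; subst hy; exact hne) h0
    exact (hpos x).ne' hx0
  -- iterate formula
  have hiter : ∀ (n : ℕ) (x : {i : ℕ // 1 ≤ i}),
      ((f^[n] x : {i : ℕ // 1 ≤ i}) : ℕ) = max ((x : ℕ) - n) 1 := by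
    intro n
    induction n with
    | zero => intro x; have := x.2; simp; omega
    | succ n ih =>
      intro x
      rw [Function.iterate_succ_apply, ih (f x), hf x]
      have := x.2
      split_ifs with h <;> omega
  -- coercion of T^n
  have hTn : ∀ (n : ℕ) (φ : Lp ℝ p μ), ⇑((T ^ n) φ) = fun x => φ (f^[n] x) := by
    intro n
    induction n with
    | zero => intro φ; funext x; simp
    | succ n ih =>
      intro φ
      have h1 : (T ^ (n + 1)) φ = T ((T ^ n) φ) := by
        rw [pow_succ']; rfl
      rw [h1, hae _ _ (hT ((T ^ n) φ)), ih φ]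
      funext x
      simp [Function.iterate_succ_apply]
  -- measure of sets as tsum
  have hμset : ∀ s : Set {i : ℕ // 1 ≤ i}, μ s = ∑' x : s, μ {(x : {i : ℕ // 1 ≤ i})} := by
    intro s
    conv_lhs => rw [← Set.biUnion_of_singleton s]
    exact measure_biUnion s.to_countable
      (fun a _ b _ hab => by simpa [Set.disjoint_singleton] using hab)
      (fun b _ => measurableSet_singleton b)
  have hzn : ∀ n : ℕ, (2 : ℝ≥0∞)⁻¹ ^ n = 2 ^ (-(n : ℤ)) := fun n => by
    rw [ENNReal.zpow_neg, zpow_natCast, ← ENNReal.inv_pow]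
  -- part 1
  have part1 : ∀ B : Set {i : ℕ // 1 ≤ i}, μ B / 2 ≤ μ (f '' B) ∧ μ (f '' B) ≤ 2 * μ B := by
    intro B
    have hfval : ∀ x : {i : ℕ // 1 ≤ i}, μ {f x} ≤ 2 * μ {x} := by
      intro x
      rw [hμ, hμ]
      have hmul : (2 : ℝ≥0∞) * 2 ^ (-(x : ℕ) : ℤ) = 2 ^ (1 + (-(x : ℕ) : ℤ)) := by
        rw [ENNReal.zpow_add h2 h2t, zpow_one]
      rw [hmul]
      apply ENNReal.zpow_le_of_le one_le_two
      rw [hf x]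
      have := x.2
      split_ifs with h <;> push_cast <;> omega
    constructor
    · -- lower bound
      have hlow : μ B ≤ 2 * μ (f '' B) := by
        set S := f '' B with hS
        set σ : {i : ℕ // 1 ≤ i} → {i : ℕ // 1 ≤ i} := fun y => ⟨(y : ℕ) + 1, by omega⟩ with hσ
        have hsub : B ⊆ (⋃ y ∈ S, {σ y}) ∪ S := by
          intro x hx
          rcases le_or_gt 2 (x : ℕ) with h | h
          · left
            have hfx : σ (f x) = x := by
              apply Subtype.ext
              simp only [hσ, hf x, if_pos h]
              have := x.2; omega
            exact Set.mem_biUnion (Set.mem_image_of_mem f hx)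
              (by rw [hfx]; exact Set.mem_singleton x)
          · right
            have hfx : f x = x := by
              apply Subtype.ext
              rw [hf x]
              have := x.2
              split_ifs with h' <;> omega
            exact hfx ▸ Set.mem_image_of_mem f hx
        have hσle : ∀ y : {i : ℕ // 1 ≤ i}, μ {σ y} ≤ μ {(y : {i : ℕ // 1 ≤ i})} := by
          intro y
          rw [hμ, hμ]
          apply ENNReal.zpow_le_of_le one_le_two
          simp only [hσ]
          push_cast
          omega
        calc μ B ≤ μ ((⋃ y ∈ S, {σ y}) ∪ S) := measure_mono hsub
          _ ≤ μ (⋃ y ∈ S, {σ y}) + μ S := measure_union_le _ _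
          _ ≤ (∑' y : S, μ {σ (y : {i : ℕ // 1 ≤ i})}) + μ S :=
              add_le_add_left (measure_biUnion_le μ S.to_countable _) _
          _ ≤ (∑' y : S, μ {(y : {i : ℕ // 1 ≤ i})}) + μ S :=
              add_le_add_left (ENNReal.tsum_le_tsum fun y : ↑S => hσle (y : {i : ℕ // 1 ≤ i})) _
          _ = μ S + μ S := by rw [← hμset]
          _ = 2 * μ S := (two_mul _).symm
      rw [ENNReal.div_le_iff_le_mul (Or.inl h2) (Or.inl h2t), mul_comm]
      exact hlow
    · -- upper bound
      have h1 : f '' B = ⋃ x ∈ B, {f x} := by ext y; simp [eq_comm]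
      rw [h1]
      calc μ (⋃ x ∈ B, {f x}) ≤ ∑' x : B, μ {f (x : {i : ℕ // 1 ≤ i})} :=
            measure_biUnion_le μ B.to_countable _
        _ ≤ ∑' x : B, 2 * μ {(x : {i : ℕ // 1 ≤ i})} :=
            ENNReal.tsum_le_tsum fun x => hfval x
        _ = 2 * ∑' x : B, μ {(x : {i : ℕ // 1 ≤ i})} := ENNReal.tsum_mul_left
        _ = 2 * μ B := by rw [← hμset]
  -- Lp norm formula
  have hlint : ∀ ψ : Lp ℝ p μ, (∫⁻ x, (‖ψ x‖₊ : ℝ≥0∞) ^ p.toReal ∂μ) ≠ ∞ := fun ψ =>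
    ((eLpNorm_lt_top_iff_lintegral_rpow_enorm_lt_top hp0 hp).mp (Lp.eLpNorm_lt_top ψ)).ne
  have hnorm : ∀ ψ : Lp ℝ p μ,
      ‖ψ‖ ^ p.toReal = (∫⁻ x, (‖ψ x‖₊ : ℝ≥0∞) ^ p.toReal ∂μ).toReal := by
    intro ψ
    rw [Lp.norm_def, eLpNorm_eq_lintegral_rpow_enorm_toReal hp0 hp, ENNReal.toReal_rpow,
      ← ENNReal.rpow_mul, one_div_mul_cancel hpt.ne', ENNReal.rpow_one]
    rfl
  have hfix : ∀ n : ℕ, f^[n] (⟨1, le_refl 1⟩ : {i : ℕ // 1 ≤ i}) = ⟨1, le_refl 1⟩ := by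
    intro n
    apply Subtype.ext
    rw [hiter]
    simp
  -- part 2
  have part2 : ∀ φ : Lp ℝ p μ,
      (φ (⟨1, le_refl 1⟩ : {i : ℕ // 1 ≤ i}) ≠ 0 →
        ∀ n : ℕ, 1 ≤ n →
          (1 / 2) * |φ (⟨1, le_refl 1⟩ : {i : ℕ // 1 ≤ i})| ^ p.toReal
            ≤ ‖(T ^ n) φ‖ ^ p.toReal) ∧
      (φ (⟨1, le_refl 1⟩ : {i : ℕ // 1 ≤ i}) = 0 →
        Tendsto (fun n : ℕ => ‖(T ^ n) φ‖) atTop (𝓝 0)) := by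
    intro φ
    constructor
    · intro hφ1 n hn
      have hpoint : ((T ^ n) φ) (⟨1, le_refl 1⟩ : {i : ℕ // 1 ≤ i})
          = φ (⟨1, le_refl 1⟩ : {i : ℕ // 1 ≤ i}) := by
        rw [hTn n φ]
        simp only [hfix]
      have hkey : (‖φ (⟨1, le_refl 1⟩ : {i : ℕ // 1 ≤ i})‖₊ : ℝ≥0∞) ^ p.toReal
            * μ {(⟨1, le_refl 1⟩ : {i : ℕ // 1 ≤ i})}
          ≤ ∫⁻ x, (‖((T ^ n) φ) x‖₊ : ℝ≥0∞) ^ p.toReal ∂μ := by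
        calc (‖φ (⟨1, le_refl 1⟩ : {i : ℕ // 1 ≤ i})‖₊ : ℝ≥0∞) ^ p.toReal
              * μ {(⟨1, le_refl 1⟩ : {i : ℕ // 1 ≤ i})}
            = ∫⁻ x in {(⟨1, le_refl 1⟩ : {i : ℕ // 1 ≤ i})},
                (‖((T ^ n) φ) x‖₊ : ℝ≥0∞) ^ p.toReal ∂μ := by
              rw [lintegral_singleton, hpoint]
          _ ≤ _ := setLIntegral_le_lintegral _ _
      have hL : ((‖φ (⟨1, le_refl 1⟩ : {i : ℕ // 1 ≤ i})‖₊ : ℝ≥0∞) ^ p.toReal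
            * μ {(⟨1, le_refl 1⟩ : {i : ℕ // 1 ≤ i})}).toReal
          = (1 / 2) * |φ (⟨1, le_refl 1⟩ : {i : ℕ // 1 ≤ i})| ^ p.toReal := by
        rw [hμ, ENNReal.toReal_mul, ← ENNReal.toReal_rpow]
        have hhalf : ((2 : ℝ≥0∞) ^ (-((⟨1, le_refl 1⟩ : {i : ℕ // 1 ≤ i}) : ℕ) : ℤ)).toReal
            = 1 / 2 := by
          rw [show (-((⟨1, le_refl 1⟩ : {i : ℕ // 1 ≤ i}) : ℕ) : ℤ) = -1 by norm_num,
            ENNReal.zpow_neg, zpow_one, ENNReal.toReal_inv]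
          norm_num
        rw [hhalf]
        simp [Real.norm_eq_abs]
        ring
      rw [hnorm, ← hL]
      exact ENNReal.toReal_mono (hlint _) hkey
    · intro hφ1
      have hIn : ∀ n : ℕ, ∫⁻ x, (‖((T ^ n) φ) x‖₊ : ℝ≥0∞) ^ p.toReal ∂μ
          ≤ 2⁻¹ ^ n * ∫⁻ x, (‖φ x‖₊ : ℝ≥0∞) ^ p.toReal ∂μ := by
        intro n
        simp only [hTn n φ]
        rw [lintegral_countable', lintegral_countable']
        set j : {i : ℕ // 1 ≤ i} → {i : ℕ // 1 ≤ i} := fun y => ⟨(y : ℕ) + n, by omega⟩ with hj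
        have hjinj : Function.Injective j := by
          intro a b hab
          apply Subtype.ext
          have := congrArg (fun z : {i : ℕ // 1 ≤ i} => (z : ℕ)) hab
          simp only [hj] at this
          omega
        have hsupp : Function.support
            (fun x => (‖φ (f^[n] x)‖₊ : ℝ≥0∞) ^ p.toReal * μ {x}) ⊆ Set.range j := by
          intro x hx
          by_contra hxr
          apply hx
          have hxn : (x : ℕ) ≤ n := by
            by_contra hgt
            exact hxr ⟨⟨(x : ℕ) - n, by omega⟩, Subtype.ext (by simp only [hj]; omega)⟩
          have hx1 : f^[n] x = ⟨1, le_refl 1⟩ := by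
            apply Subtype.ext
            rw [hiter]
            have := x.2
            simp
            omega
          show (‖φ (f^[n] x)‖₊ : ℝ≥0∞) ^ p.toReal * μ {x} = 0
          rw [hx1, hφ1]
          simp [ENNReal.zero_rpow_of_pos hpt]
        have htsum : (∑' x, (‖φ (f^[n] x)‖₊ : ℝ≥0∞) ^ p.toReal * μ {x})
            = ∑' y, (‖φ (f^[n] (j y))‖₊ : ℝ≥0∞) ^ p.toReal * μ {j y} :=
          (hjinj.tsum_eq hsupp).symm
        rw [htsum]
        have hterm : ∀ y : {i : ℕ // 1 ≤ i},
            (‖φ (f^[n] (j y))‖₊ : ℝ≥0∞) ^ p.toReal * μ {j y}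
            = 2⁻¹ ^ n * ((‖φ y‖₊ : ℝ≥0∞) ^ p.toReal * μ {y}) := by
          intro y
          have h1 : f^[n] (j y) = y := by
            apply Subtype.ext
            rw [hiter]
            simp only [hj]
            have := y.2
            omega
          have h2' : μ {j y} = 2⁻¹ ^ n * μ {y} := by
            rw [hμ, hμ, hzn, ← ENNReal.zpow_add h2 h2t]
            congr 1
            simp only [hj]
            push_cast
            ring
          rw [h1, h2']
          ring
        refine le_of_eq ?_
        calc (∑' y, (‖φ (f^[n] (j y))‖₊ : ℝ≥0∞) ^ p.toReal * μ {j y})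
            = ∑' y, 2⁻¹ ^ n * ((‖φ y‖₊ : ℝ≥0∞) ^ p.toReal * μ {y}) := tsum_congr hterm
          _ = 2⁻¹ ^ n * ∑' y, (‖φ y‖₊ : ℝ≥0∞) ^ p.toReal * μ {y} := ENNReal.tsum_mul_left
      have hnle : ∀ n : ℕ, ‖(T ^ n) φ‖ ^ p.toReal
          ≤ (1 / 2 : ℝ) ^ n * (∫⁻ x, (‖φ x‖₊ : ℝ≥0∞) ^ p.toReal ∂μ).toReal := by
        intro n
        rw [hnorm]
        have hfin : (2 : ℝ≥0∞)⁻¹ ^ n * ∫⁻ x, (‖φ x‖₊ : ℝ≥0∞) ^ p.toReal ∂μ ≠ ∞ :=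
          ENNReal.mul_ne_top (ENNReal.pow_ne_top (ENNReal.inv_ne_top.mpr h2)) (hlint φ)
        calc (∫⁻ x, (‖((T ^ n) φ) x‖₊ : ℝ≥0∞) ^ p.toReal ∂μ).toReal
            ≤ ((2 : ℝ≥0∞)⁻¹ ^ n * ∫⁻ x, (‖φ x‖₊ : ℝ≥0∞) ^ p.toReal ∂μ).toReal :=
              ENNReal.toReal_mono hfin (hIn n)
          _ = (1 / 2 : ℝ) ^ n * (∫⁻ x, (‖φ x‖₊ : ℝ≥0∞) ^ p.toReal ∂μ).toReal := by
              rw [ENNReal.toReal_mul, ENNReal.toReal_pow, ENNReal.toReal_inv]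
              norm_num
      have h0 : Tendsto (fun n : ℕ => ‖(T ^ n) φ‖ ^ p.toReal) atTop (𝓝 0) := by
        apply squeeze_zero (fun n => Real.rpow_nonneg (norm_nonneg _) _) hnle
        have := (tendsto_pow_atTop_nhds_zero_of_lt_one
          (by norm_num : (0 : ℝ) ≤ 1 / 2) (by norm_num : (1 / 2 : ℝ) < 1)).mul_const
          ((∫⁻ x, (‖φ x‖₊ : ℝ≥0∞) ^ p.toReal ∂μ).toReal)
        simpa using this
      have hcont : Tendsto (fun n : ℕ => (‖(T ^ n) φ‖ ^ p.toReal) ^ (p.toReal)⁻¹)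
          atTop (𝓝 0) := by
        have hc : ContinuousAt (fun x : ℝ => x ^ (p.toReal)⁻¹) 0 :=
          Real.continuousAt_rpow_const 0 _ (Or.inr (by positivity))
        have := hc.tendsto.comp h0
        simpa [Function.comp_def, Real.zero_rpow (inv_ne_zero hpt.ne')] using this
      have heq : ∀ n : ℕ, (‖(T ^ n) φ‖ ^ p.toReal) ^ (p.toReal)⁻¹ = ‖(T ^ n) φ‖ := by
        intro n
        rw [← Real.rpow_mul (norm_nonneg _), mul_inv_cancel₀ hpt.ne', Real.rpow_one]
      simpa only [heq] using hcont
  -- part 3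
  have part3 : ¬ ∃ φ : Lp ℝ p μ,
      (∀ ε > (0 : ℝ), ∃ᶠ n in atTop, ‖(T ^ n) φ‖ < ε) ∧
      (∃ ε > (0 : ℝ), ∃ᶠ n in atTop, ε < ‖(T ^ n) φ‖) := by
    rintro ⟨φ, hsmall, ε, hε, hbig⟩
    by_cases h1 : φ (⟨1, le_refl 1⟩ : {i : ℕ // 1 ≤ i}) = 0
    · have htend := (part2 φ).2 h1
      have hev : ∀ᶠ n in atTop, ‖(T ^ n) φ‖ < ε := htend.eventually_lt_const hε
      obtain ⟨n, hn1, hn2⟩ := (hbig.and_eventually hev).exists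
      exact absurd hn1 (not_lt.mpr hn2.le)
    · set c := ((1 / 2) * |φ (⟨1, le_refl 1⟩ : {i : ℕ // 1 ≤ i})| ^ p.toReal) ^ (p.toReal)⁻¹
        with hc
      have hbase : 0 < (1 / 2) * |φ (⟨1, le_refl 1⟩ : {i : ℕ // 1 ≤ i})| ^ p.toReal := by
        have : 0 < |φ (⟨1, le_refl 1⟩ : {i : ℕ // 1 ≤ i})| := abs_pos.mpr h1
        positivity
      have hcpos : 0 < c := Real.rpow_pos_of_pos hbase _
      obtain ⟨n, hlt, hn⟩ := ((hsmall c hcpos).and_eventually (eventually_ge_atTop 1)).exists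
      have hlb := (part2 φ).1 h1 n hn
      have hub : ‖(T ^ n) φ‖ ^ p.toReal < c ^ p.toReal :=
        Real.rpow_lt_rpow (norm_nonneg _) hlt hpt
      have hcp : c ^ p.toReal = (1 / 2) * |φ (⟨1, le_refl 1⟩ : {i : ℕ // 1 ≤ i})| ^ p.toReal := by
        rw [hc, ← Real.rpow_mul hbase.le, inv_mul_cancel₀ hpt.ne', Real.rpow_one]
      rw [hcp] at hub
      linarith
  -- part 4
  have hitT : ∀ (n : ℕ) (z : Lp ℝ p μ), (⇑T)^[n] z = (T ^ n) z := by
    intro n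
    induction n with
    | zero => intro z; simp
    | succ n ih =>
      intro z
      rw [Function.iterate_succ_apply', ih, ← ContinuousLinearMap.mul_apply, ← pow_succ']
  have part4 : ¬ LiYorkeChaotic (⇑T) := by
    rintro ⟨S, hSc, hS⟩
    have hSnt : S.Nontrivial := by
      by_contra hns
      exact hSc ((Set.not_nontrivial_iff.mp hns).countable)
    obtain ⟨x, hx, y, hy, hxy⟩ := hSnt
    obtain ⟨hsmall, hbig⟩ := hS x hx y hy hxy
    apply part3
    refine ⟨x - y, ?_, ?_⟩
    · intro ε hε
      have := hsmall ε hε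
      simpa only [hitT, dist_eq_norm, map_sub] using this
    · obtain ⟨ε, hε, hfreq⟩ := hbig
      exact ⟨ε, hε, by simpa only [hitT, dist_eq_norm, map_sub] using hfreq⟩
  refine ⟨part1, part2, part3, part4, ?_, ?_⟩
  · rw [hμ]
    exact ENNReal.zpow_pos h2 h2t _
  · have hpre : ∀ n : ℕ, f^[n] ⁻¹' {(⟨2, one_le_two⟩ : {i : ℕ // 1 ≤ i})}
        = {(⟨n + 2, by omega⟩ : {i : ℕ // 1 ≤ i})} := by
      intro n
      ext z
      simp only [Set.mem_preimage, Set.mem_singleton_iff, Subtype.ext_iff, hiter]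
      have := z.2
      omega
    have hval : ∀ n : ℕ, μ (f^[n] ⁻¹' {(⟨2, one_le_two⟩ : {i : ℕ // 1 ≤ i})})
        = (2 : ℝ≥0∞)⁻¹ ^ (n + 2) := by
      intro n
      rw [hpre n, hμ, hzn]
    rw [show (fun n : ℕ => μ (f^[n] ⁻¹' {(⟨2, one_le_two⟩ : {i : ℕ // 1 ≤ i})}))
        = fun n : ℕ => (2 : ℝ≥0∞)⁻¹ ^ (n + 2) from funext hval]
    have hlt1 : (2 : ℝ≥0∞)⁻¹ < 1 := ENNReal.inv_lt_one.mpr (by norm_num)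
    have := (ENNReal.tendsto_pow_atTop_nhds_zero_of_lt_one hlt1).comp (tendsto_add_atTop_nat 2)
    simpa [Function.comp_def] using this
end
end

section
/- For every 1 ≤ p < ∞ there exists a σ-finite measure μ on (ℤ,𝒫(ℤ)) such that the shift f : i ↦ i+1 satisfies (1/2)·μ(B) ≤ μ(f(B)) ≤ 2·μ(B) for every B ⊆ ℤ (so that both T_f and T_{f^{-1}} = T_f^{-1} are well-defined continuous linear operators on L^p(ℤ,𝒫(ℤ),μ)), the composition operator T_f is Li-Yorke chaotic, and its inverse T_f^{-1} is not Li-Yorke chaotic. -/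
open MeasureTheory Filter Set Topology
open scoped ENNReal

noncomputable section

namespace LYAux

/-- distance from `m` to the nearest square -/
def d (m : ℕ) : ℕ := sInf (Set.range fun k => Nat.dist m (k ^ 2))

lemma d_le (m k : ℕ) : d m ≤ Nat.dist m (k ^ 2) := Nat.sInf_le ⟨k, rfl⟩

lemma d_exists (m : ℕ) : ∃ k, d m = Nat.dist m (k ^ 2) := by
  have h : d m ∈ Set.range fun k => Nat.dist m (k ^ 2) :=
    Nat.sInf_mem ⟨Nat.dist m 0, 0, by norm_num⟩
  obtain ⟨k, hk⟩ := h
  exact ⟨k, hk.symm⟩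

lemma d_sq (k : ℕ) : d (k ^ 2) = 0 := by
  have := d_le (k ^ 2) k
  simp [Nat.dist] at this
  omega

lemma d_le_self (m : ℕ) : d m ≤ m := by simpa [Nat.dist] using d_le m 0

lemma d_lip (a b : ℕ) : d a ≤ d b + Nat.dist a b := by
  obtain ⟨k, hk⟩ := d_exists b
  calc d a ≤ Nat.dist a (k ^ 2) := d_le a k
    _ ≤ Nat.dist a b + Nat.dist b (k ^ 2) := Nat.dist.triangle_inequality _ _ _
    _ = d b + Nat.dist a b := by rw [hk]; omega

lemma d_mid (k : ℕ) : k ≤ d (k ^ 2 + k) := by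
  obtain ⟨j, hj⟩ := d_exists (k ^ 2 + k)
  rw [hj]
  rcases le_or_gt j k with h | h
  · have : j ^ 2 ≤ k ^ 2 := Nat.pow_le_pow_left h 2
    simp [Nat.dist]; omega
  · have : (k + 1) ^ 2 ≤ j ^ 2 := Nat.pow_le_pow_left h 2
    have : k ^ 2 + 2 * k + 1 ≤ j ^ 2 := by nlinarith
    simp [Nat.dist]; omega

lemma d_mid' (k : ℕ) : d (k ^ 2 + k) = k := by
  have h1 := d_mid k
  have h2 : d (k ^ 2 + k) ≤ k := by
    have := d_le (k ^ 2 + k) k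
    simpa [Nat.dist] using this
  omega

/-- the exponent function on ℤ -/
def D (i : ℤ) : ℕ := d (-i).toNat

lemma D_le (i : ℤ) : D i ≤ (-i).toNat := d_le_self _

lemma D_succ_le (i : ℤ) : D (i + 1) ≤ D i + 1 := by
  have h := d_lip (-(i + 1)).toNat (-i).toNat
  have : Nat.dist (-(i + 1)).toNat (-i).toNat ≤ 1 := by
    simp [Nat.dist]; omega
  calc D (i + 1) ≤ D i + Nat.dist (-(i+1)).toNat (-i).toNat := h
    _ ≤ D i + 1 := by omega

lemma D_le_succ (i : ℤ) : D i ≤ D (i + 1) + 1 := by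
  have h := d_lip (-i).toNat (-(i + 1)).toNat
  have : Nat.dist (-i).toNat (-(i + 1)).toNat ≤ 1 := by
    simp [Nat.dist]; omega
  calc D i ≤ D (i + 1) + Nat.dist (-i).toNat (-(i+1)).toNat := h
    _ ≤ D (i + 1) + 1 := by omega

lemma D_neg_nat (n : ℕ) : D (-(n : ℤ)) = d n := by simp [D]

/-- the weight function -/
def w (i : ℤ) : ℝ≥0∞ := 2⁻¹ ^ D i

lemma w_ne_zero (i : ℤ) : w i ≠ 0 :=
  pow_ne_zero _ (by simp)

lemma w_le_one (i : ℤ) : w i ≤ 1 :=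
  pow_le_one' (ENNReal.inv_le_one.2 one_le_two) _

lemma w_ne_top (i : ℤ) : w i ≠ ∞ := (lt_of_le_of_lt (w_le_one i) ENNReal.one_lt_top).ne

lemma pow_half_le {a b : ℕ} (h : b ≤ a + 1) : (2⁻¹ : ℝ≥0∞) ^ a ≤ 2 * 2⁻¹ ^ b := by
  calc (2⁻¹ : ℝ≥0∞) ^ a = 2 * 2⁻¹ ^ (a + 1) := by
        rw [pow_succ]
        rw [mul_comm ((2⁻¹:ℝ≥0∞)^a) 2⁻¹, ← mul_assoc]
        rw [ENNReal.mul_inv_cancel (by norm_num) (by norm_num), one_mul]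
    _ ≤ 2 * 2⁻¹ ^ b :=
        mul_le_mul_right (pow_le_pow_right_of_le_one' (ENNReal.inv_le_one.2 one_le_two) h) 2

lemma w_succ_le (i : ℤ) : w (i + 1) ≤ 2 * w i := pow_half_le (D_le_succ i)

lemma w_le_succ (i : ℤ) : w i ≤ 2 * w (i + 1) := pow_half_le (D_succ_le i)
/-- the measure -/
def μ : Measure ℤ := (Measure.count : Measure ℤ).withDensity w

lemma meas (B : Set ℤ) : MeasurableSet B := trivial

lemma μ_apply (B : Set ℤ) : μ B = ∑' i, B.indicator w i := by
  rw [μ, withDensity_apply w (meas B), ← lintegral_indicator (meas B),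
    lintegral_count]

lemma μ_singleton (a : ℤ) : μ {a} = w a := by
  rw [μ_apply, tsum_eq_single a]
  · simp
  · intro b hb
    simp [Set.indicator_of_notMem, hb]

lemma ae_top : ae μ = ⊤ :=
  ae_eq_top.2 fun a => by rw [μ_singleton]; exact w_ne_zero a

lemma ae_all {P : ℤ → Prop} (h : ∀ᵐ i ∂μ, P i) : ∀ i, P i := by
  rw [ae_top, eventually_top] at h; exact h

instance : SigmaFinite μ := by
  refine Measure.sigmaFinite_of_countable
    (Set.countable_range fun i : ℤ => ({i} : Set ℤ)) ?_ ?_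
  · rintro s ⟨i, rfl⟩
    rw [μ_singleton]
    exact lt_of_le_of_lt (w_le_one i) ENNReal.one_lt_top
  · rw [Set.sUnion_range]
    exact Set.iUnion_of_singleton ℤ

lemma μ_image_shift (B : Set ℤ) :
    μ ((fun i : ℤ => i + 1) '' B) = ∑' j, B.indicator (fun j => w (j + 1)) j := by
  rw [μ_apply, ← Equiv.tsum_eq (Equiv.addRight (1 : ℤ))]
  apply tsum_congr
  intro j
  simp only [Equiv.coe_addRight]
  by_cases hj : j ∈ B
  · rw [Set.indicator_of_mem hj,
      Set.indicator_of_mem (Set.mem_image_of_mem _ hj)]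
  · rw [Set.indicator_of_notMem hj, Set.indicator_of_notMem]
    rintro ⟨x, hx, hxe⟩
    have : x = j := by simpa using hxe
    exact hj (this ▸ hx)

lemma μ_ratio (B : Set ℤ) :
    μ B / 2 ≤ μ ((fun i : ℤ => i + 1) '' B) ∧
      μ ((fun i : ℤ => i + 1) '' B) ≤ 2 * μ B := by
  constructor
  · rw [ENNReal.div_le_iff (by norm_num) (by norm_num), mul_comm, μ_image_shift,
      ← ENNReal.tsum_mul_left, μ_apply]
    apply ENNReal.tsum_le_tsum
    intro j
    by_cases hj : j ∈ B
    · simp only [Set.indicator_of_mem hj]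
      exact w_le_succ j
    · simp [Set.indicator_of_notMem hj]
  · rw [μ_image_shift, μ_apply, ← ENNReal.tsum_mul_left]
    apply ENNReal.tsum_le_tsum
    intro j
    by_cases hj : j ∈ B
    · simp only [Set.indicator_of_mem hj]
      exact w_succ_le j
    · simp [Set.indicator_of_notMem hj]
lemma lint (F : ℤ → ℝ≥0∞) : ∫⁻ i, F i ∂μ = ∑' i, F i * w i := by
  rw [μ, lintegral_withDensity_eq_lintegral_mul _ (measurable_of_countable w)
    (measurable_of_countable F), lintegral_count]
  exact tsum_congr fun i => mul_comm _ _

section Op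
variable (p : ℝ≥0∞)

lemma eLp_eq (hp0 : p ≠ 0) (hpt : p ≠ ∞) (g : ℤ → ℝ) :
    eLpNorm g p μ = (∑' i, (‖g i‖₊ : ℝ≥0∞) ^ p.toReal * w i) ^ (1 / p.toReal) := by
  rw [eLpNorm_eq_lintegral_rpow_enorm_toReal hp0 hpt, lint]
  rfl

lemma eLp_shift (hp0 : p ≠ 0) (hpt : p ≠ ∞) (c : ℤ) (hw : ∀ j, w (j - c) ≤ 2 * w j)
    (g : ℤ → ℝ) :
    eLpNorm (fun i => g (i + c)) p μ ≤ 2 ^ (1 / p.toReal) * eLpNorm g p μ := by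
  have hpt0 : (0:ℝ) < p.toReal := ENNReal.toReal_pos hp0 hpt
  rw [eLp_eq p hp0 hpt, eLp_eq p hp0 hpt]
  have h1 : ∑' i, (‖g (i + c)‖₊ : ℝ≥0∞) ^ p.toReal * w i
      = ∑' j, (‖g j‖₊ : ℝ≥0∞) ^ p.toReal * w (j - c) := by
    rw [← Equiv.tsum_eq (Equiv.subRight c)
      (fun i => (‖g (i + c)‖₊ : ℝ≥0∞) ^ p.toReal * w i)]
    apply tsum_congr
    intro j
    simp [Equiv.subRight, sub_add_cancel]
  rw [h1, ← ENNReal.mul_rpow_of_nonneg _ _ (by positivity : (0:ℝ) ≤ 1 / p.toReal)]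
  apply ENNReal.rpow_le_rpow _ (by positivity)
  rw [← ENNReal.tsum_mul_left]
  apply ENNReal.tsum_le_tsum
  intro j
  rw [mul_left_comm]
  exact mul_le_mul_right (hw j) _

lemma memLp_shift (hp0 : p ≠ 0) (hpt : p ≠ ∞) (c : ℤ) (hw : ∀ j, w (j - c) ≤ 2 * w j)
    {g : ℤ → ℝ} (hg : MemLp g p μ) : MemLp (fun i => g (i + c)) p μ := by
  refine ⟨(measurable_of_countable _).aestronglyMeasurable, ?_⟩
  apply lt_of_le_of_lt (eLp_shift p hp0 hpt c hw g)
  exact ENNReal.mul_lt_top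
    (ENNReal.rpow_lt_top_of_nonneg (by positivity : (0:ℝ) ≤ 1 / p.toReal)
      (by norm_num)) hg.2

lemma lp_coe_ext {φ ψ : Lp ℝ p μ} (h : ⇑φ = ⇑ψ) : φ = ψ :=
  Lp.ext (by rw [h])

lemma coe_toLp {g : ℤ → ℝ} (hg : MemLp g p μ) : ⇑(hg.toLp g) = g :=
  funext (ae_all hg.coeFn_toLp)

lemma coe_add (φ ψ : Lp ℝ p μ) : ⇑(φ + ψ) = ⇑φ + ⇑ψ :=
  funext (ae_all (Lp.coeFn_add φ ψ))

lemma coe_sub (φ ψ : Lp ℝ p μ) : ⇑(φ - ψ) = ⇑φ - ⇑ψ :=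
  funext (ae_all (Lp.coeFn_sub φ ψ))

lemma coe_smul (a : ℝ) (φ : Lp ℝ p μ) : ⇑(a • φ) = a • ⇑φ :=
  funext (ae_all (Lp.coeFn_smul a φ))

variable [Fact (1 ≤ p)]

lemma hp0 : p ≠ 0 := (lt_of_lt_of_le zero_lt_one (Fact.out : 1 ≤ p)).ne'

/-- the shift operator by `c` as a linear map -/
def TgenL (hpt : p ≠ ∞) (c : ℤ) (hw : ∀ j, w (j - c) ≤ 2 * w j) :
    Lp ℝ p μ →ₗ[ℝ] Lp ℝ p μ where
  toFun φ := (memLp_shift p (hp0 p) hpt c hw (Lp.memLp φ)).toLp _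
  map_add' φ ψ := by
    apply lp_coe_ext p
    beta_reduce
    simp only [coe_toLp p, coe_add p]
    funext i
    simp
  map_smul' a φ := by
    apply lp_coe_ext p
    simp only [RingHom.id_apply]
    beta_reduce
    simp only [coe_toLp p, coe_smul p]
    funext i
    simp

/-- the shift operator by `c` as a continuous linear map -/
def Tgen (hpt : p ≠ ∞) (c : ℤ) (hw : ∀ j, w (j - c) ≤ 2 * w j) :
    Lp ℝ p μ →L[ℝ] Lp ℝ p μ :=
  (TgenL p hpt c hw).mkContinuous ((2 : ℝ≥0∞) ^ (1 / p.toReal)).toReal (by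
    intro φ
    show ‖MemLp.toLp _ (memLp_shift p (hp0 p) hpt c hw (Lp.memLp φ))‖ ≤ _
    rw [Lp.norm_toLp, Lp.norm_def]
    rw [← ENNReal.toReal_mul]
    apply ENNReal.toReal_mono
    · exact ENNReal.mul_ne_top
        (ENNReal.rpow_lt_top_of_nonneg (by positivity : (0:ℝ) ≤ 1 / p.toReal)
          (by norm_num)).ne (Lp.eLpNorm_ne_top φ)
    · exact eLp_shift p (hp0 p) hpt c hw _)

lemma Tgen_coe (hpt : p ≠ ∞) (c : ℤ) (hw : ∀ j, w (j - c) ≤ 2 * w j)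
    (φ : Lp ℝ p μ) : ⇑(Tgen p hpt c hw φ) = fun i => ⇑φ (i + c) :=
  coe_toLp p (memLp_shift p (hp0 p) hpt c hw (Lp.memLp φ))

lemma hw1 : ∀ j : ℤ, w (j - 1) ≤ 2 * w j := fun j => by
  have := w_le_succ (j - 1)
  simpa using this

lemma hwm1 : ∀ j : ℤ, w (j - (-1)) ≤ 2 * w j := fun j => by
  have := w_succ_le j
  simpa [sub_neg_eq_add] using this

/-- the basic vector: indicator of {0} -/
def x0 (hpt : p ≠ ∞) : Lp ℝ p μ :=
  MemLp.toLp _ (memLp_indicator_const p (meas {0}) (1 : ℝ)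
    (Or.inr (by rw [μ_singleton]; exact w_ne_top 0)))

lemma coe_smul_x0 (hpt : p ≠ ∞) (a : ℝ) :
    ⇑(a • x0 p hpt) = ({0} : Set ℤ).indicator (fun _ => a) := by
  rw [coe_smul p, x0, coe_toLp p]
  funext i
  by_cases h : i = (0 : ℤ) <;> simp [Set.indicator_apply, h]

lemma norm_indicator_lp (hpt : p ≠ ∞) (φ : Lp ℝ p μ) (t : ℤ) (c : ℝ)
    (h : ⇑φ = ({t} : Set ℤ).indicator fun _ => c) :
    ‖φ‖ = |c| * ((w t) ^ (1 / p.toReal)).toReal := by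
  rw [Lp.norm_def, eLpNorm_congr_ae (Filter.EventuallyEq.of_eq h),
    eLpNorm_indicator_const (meas _) (hp0 p) hpt, μ_singleton, ENNReal.toReal_mul]
  simp [Real.norm_eq_abs]

lemma point_le (hpt : p ≠ ∞) (φ : Lp ℝ p μ) (j : ℤ) :
    (‖⇑φ j‖₊ : ℝ≥0∞) * (w j) ^ (1 / p.toReal) ≤ eLpNorm ⇑φ p μ := by
  have hmono : eLpNorm (({j} : Set ℤ).indicator fun _ => ⇑φ j) p μ ≤ eLpNorm ⇑φ p μ := by
    apply eLpNorm_mono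
    intro i
    by_cases h : i = j
    · simp [Set.indicator_apply, h]
    · simp [Set.indicator_apply, h]
  rwa [eLpNorm_indicator_const (meas _) (hp0 p) hpt, μ_singleton] at hmono

lemma iterT_coe (hpt : p ≠ ∞) (a : ℝ) (n : ℕ) :
    ⇑((⇑(Tgen p hpt 1 hw1))^[n] (a • x0 p hpt))
      = ({-(n : ℤ)} : Set ℤ).indicator (fun _ => a) := by
  induction n with
  | zero => simpa using coe_smul_x0 p hpt a
  | succ n ih =>
    rw [Function.iterate_succ_apply', Tgen_coe]
    funext i
    rw [ih]
    simp only [Set.indicator_apply, Set.mem_singleton_iff]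
    have he : (i + 1 = -(n : ℤ)) ↔ (i = -((n + 1 : ℕ) : ℤ)) := by push_cast; omega
    simp only [he]

lemma iterS_coe (hpt : p ≠ ∞) (ψ : Lp ℝ p μ) (n : ℕ) :
    ⇑((⇑(Tgen p hpt (-1) hwm1))^[n] ψ) = fun i => ⇑ψ (i - n) := by
  induction n with
  | zero => funext i; simp
  | succ n ih =>
    rw [Function.iterate_succ_apply', Tgen_coe]
    funext i
    rw [ih]
    congr 1
    push_cast
    ring

lemma iterS_sub (hpt : p ≠ ∞) (x y : Lp ℝ p μ) (n : ℕ) :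
    (⇑(Tgen p hpt (-1) hwm1))^[n] x - (⇑(Tgen p hpt (-1) hwm1))^[n] y
      = (⇑(Tgen p hpt (-1) hwm1))^[n] (x - y) := by
  induction n with
  | zero => simp
  | succ n ih =>
    rw [Function.iterate_succ_apply', Function.iterate_succ_apply',
      Function.iterate_succ_apply', ← map_sub, ih]


lemma T_chaotic (hpt : p ≠ ∞) : LiYorkeChaotic ⇑(Tgen p hpt 1 hw1) := by
  have hpt0 : (0:ℝ) < p.toReal := ENNReal.toReal_pos (hp0 p) hpt
  set q : ℝ := ((2⁻¹ : ℝ≥0∞) ^ ((1:ℝ) / p.toReal)).toReal with hq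
  refine ⟨(fun a : ℝ => a • x0 p hpt) '' Set.univ, ?_, ?_⟩
  · intro hc
    have hinj : Function.Injective (fun a : ℝ => a • x0 p hpt) := by
      intro a b hab
      have := congrArg (fun φ : Lp ℝ p μ => ⇑φ (0:ℤ)) hab
      simpa [coe_smul_x0 p hpt] using this
    have hsub : (Set.univ : Set ℝ)
        ⊆ (fun a : ℝ => a • x0 p hpt) ⁻¹' ((fun a : ℝ => a • x0 p hpt) '' Set.univ) :=
      fun a _ => ⟨a, Set.mem_univ a, rfl⟩
    exact Cardinal.not_countable_real (Set.Countable.mono hsub (hc.preimage hinj))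
  · rintro x ⟨a, -, rfl⟩ y ⟨b, -, rfl⟩ hxy
    have hab : a ≠ b := fun h => hxy (by rw [h])
    have habs : 0 < |a - b| := abs_pos.2 (sub_ne_zero_of_ne hab)
    have hdist : ∀ n : ℕ, dist ((⇑(Tgen p hpt 1 hw1))^[n] (a • x0 p hpt))
        ((⇑(Tgen p hpt 1 hw1))^[n] (b • x0 p hpt))
        = |a - b| * ((w (-(n:ℤ))) ^ (1 / p.toReal)).toReal := by
      intro n
      rw [dist_eq_norm]
      apply norm_indicator_lp p hpt _ (-(n:ℤ)) (a - b)
      rw [coe_sub p, iterT_coe p hpt a n, iterT_coe p hpt b n]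
      funext i
      by_cases h : i = -(n:ℤ) <;> simp [Set.indicator_apply, h]
    have hw_sq : ∀ k : ℕ, w (-((k^2 : ℕ) : ℤ)) = 1 := fun k => by
      rw [w, D_neg_nat, d_sq, pow_zero]
    have hw_mid : ∀ k : ℕ, w (-((k^2 + k : ℕ) : ℤ)) = 2⁻¹ ^ k := fun k => by
      rw [w, D_neg_nat, d_mid']
    have hq_pow : ∀ k : ℕ, (((2⁻¹:ℝ≥0∞) ^ k) ^ ((1:ℝ) / p.toReal)).toReal = q ^ k := by
      intro k
      rw [← ENNReal.rpow_natCast (2⁻¹:ℝ≥0∞) k, ← ENNReal.rpow_mul, mul_comm,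
        ENNReal.rpow_mul, ENNReal.rpow_natCast, ENNReal.toReal_pow]
    have hq0 : 0 ≤ q := ENNReal.toReal_nonneg
    have hq1 : q < 1 := by
      have h2 : (2⁻¹:ℝ≥0∞) ^ ((1:ℝ) / p.toReal) < 1 :=
        ENNReal.rpow_lt_one (ENNReal.inv_lt_one.2 (by norm_num : (1:ℝ≥0∞) < 2)) (by positivity)
      rw [hq, ← ENNReal.toReal_one]
      exact (ENNReal.toReal_lt_toReal
        (ENNReal.rpow_lt_top_of_nonneg (by positivity) (by norm_num)).ne
        ENNReal.one_ne_top).2 h2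
    constructor
    · intro ε hε
      rw [frequently_atTop]
      intro N
      have htend : Tendsto (fun k : ℕ => |a - b| * q ^ k) atTop (nhds 0) := by
        have := tendsto_pow_atTop_nhds_zero_of_lt_one hq0 hq1
        simpa using this.const_mul |a - b|
      have hev : ∀ᶠ k : ℕ in atTop, |a - b| * q ^ k < ε :=
        htend.eventually_lt_const hε
      obtain ⟨k, hk1, hk2⟩ := (hev.and (eventually_ge_atTop N)).exists
      refine ⟨k^2 + k, le_trans hk2 (Nat.le_add_left k (k^2)), ?_⟩
      rw [hdist (k^2 + k), hw_mid k, hq_pow k]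
      exact hk1
    · refine ⟨|a - b| / 2, by positivity, ?_⟩
      rw [frequently_atTop]
      intro N
      refine ⟨N^2, Nat.le_self_pow two_ne_zero N, ?_⟩
      rw [hdist (N^2), hw_sq N, ENNReal.one_rpow, ENNReal.toReal_one, mul_one]
      linarith

lemma S_not_chaotic (hpt : p ≠ ∞) : ¬ LiYorkeChaotic ⇑(Tgen p hpt (-1) hwm1) := by
  rintro ⟨Sc, hScount, hpair⟩
  have hnontriv : Sc.Nontrivial := by
    rw [← Set.not_subsingleton_iff]
    exact fun h => hScount h.countable
  obtain ⟨x, hx, y, hy, hxy⟩ := hnontriv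
  obtain ⟨cond1, -⟩ := hpair x hx y hy hxy
  have hψne : x - y ≠ 0 := sub_ne_zero_of_ne hxy
  set ψ := x - y with hψ
  have hj : ∃ j : ℤ, ⇑ψ j ≠ 0 := by
    by_contra h
    push_neg at h
    apply hψne
    apply lp_coe_ext p
    funext i
    rw [h i, funext (ae_all (Lp.coeFn_zero ℝ p μ))]
    simp
  obtain ⟨j₀, hj₀⟩ := hj
  set E : ℝ≥0∞ := (‖⇑ψ j₀‖₊ : ℝ≥0∞) * ((2⁻¹:ℝ≥0∞) ^ j₀.natAbs) ^ ((1:ℝ) / p.toReal)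
    with hE
  have hE0 : E ≠ 0 := by
    apply mul_ne_zero
    · simpa using hj₀
    · exact (ENNReal.rpow_pos
        (pos_iff_ne_zero.2 (pow_ne_zero _ (by norm_num)))
        (ENNReal.pow_ne_top (by norm_num))).ne'
  have hEtop : E ≠ ∞ :=
    ENNReal.mul_ne_top ENNReal.coe_ne_top
      (ENNReal.rpow_lt_top_of_nonneg (by positivity) (ENNReal.pow_ne_top (by norm_num))).ne
  have hε₀ : 0 < E.toReal := ENNReal.toReal_pos hE0 hEtop
  have hlow : ∀ n : ℕ, E.toReal ≤ dist ((⇑(Tgen p hpt (-1) hwm1))^[n] x)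
      ((⇑(Tgen p hpt (-1) hwm1))^[n] y) := by
    intro n
    rw [dist_eq_norm, iterS_sub p hpt x y n, ← hψ, Lp.norm_def]
    apply ENNReal.toReal_mono (Lp.eLpNorm_ne_top _)
    calc E ≤ (‖⇑((⇑(Tgen p hpt (-1) hwm1))^[n] ψ) (j₀ + n)‖₊ : ℝ≥0∞)
          * (w (j₀ + n)) ^ (1 / p.toReal) := by
          apply mul_le_mul'
          · rw [iterS_coe p hpt ψ n]
            simp
          · apply ENNReal.rpow_le_rpow _ (by positivity)
            rw [w]
            apply pow_le_pow_right_of_le_one' (ENNReal.inv_le_one.2 one_le_two)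
            calc D (j₀ + n) ≤ (-(j₀ + n)).toNat := D_le _
              _ ≤ j₀.natAbs := by omega
      _ ≤ eLpNorm ⇑((⇑(Tgen p hpt (-1) hwm1))^[n] ψ) p μ := point_le p hpt _ _
  obtain ⟨n, hn⟩ := (cond1 E.toReal hε₀).exists
  exact absurd hn (not_lt.2 (hlow n))

end Op
end LYAux

/-- **Example (a Li-Yorke chaotic `T_f` whose inverse is not Li-Yorke chaotic).**
For every `1 ≤ p < ∞` there exists a σ-finite measure `μ` on `𝒫(ℤ)` such that the shift
`f : i ↦ i + 1` satisfies `(1/2)·μ(B) ≤ μ(f(B)) ≤ 2·μ(B)` for every `B ⊆ ℤ`, the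
composition operator `T_f` on `L^p(ℤ, 𝒫(ℤ), μ)` is Li-Yorke chaotic, and its inverse
`T_f⁻¹ = T_{f⁻¹}` is not Li-Yorke chaotic. -/
theorem exists_liYorke_shift_inverse_not_liYorke
    (p : ℝ≥0∞) [Fact (1 ≤ p)] (hp : p ≠ ∞) :
    ∃ μ : Measure ℤ, SigmaFinite μ ∧
      (∀ B : Set ℤ, μ B / 2 ≤ μ ((fun i : ℤ => i + 1) '' B) ∧
        μ ((fun i : ℤ => i + 1) '' B) ≤ 2 * μ B) ∧
      (∃ T : Lp ℝ p μ →L[ℝ] Lp ℝ p μ,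
        (∀ φ : Lp ℝ p μ, ⇑(T φ) =ᵐ[μ] fun i => φ (i + 1)) ∧
        LiYorkeChaotic (⇑T)) ∧
      (∃ S : Lp ℝ p μ →L[ℝ] Lp ℝ p μ,
        (∀ φ : Lp ℝ p μ, ⇑(S φ) =ᵐ[μ] fun i => φ (i - 1)) ∧
        ¬ LiYorkeChaotic (⇑S)) := by
  refine ⟨LYAux.μ, inferInstance, LYAux.μ_ratio, ?_, ?_⟩
  · refine ⟨LYAux.Tgen p hp 1 LYAux.hw1, ?_, LYAux.T_chaotic p hp⟩
    intro φ
    rw [LYAux.Tgen_coe]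
  · refine ⟨LYAux.Tgen p hp (-1) LYAux.hwm1, ?_, LYAux.S_not_chaotic p hp⟩
    intro φ
    rw [LYAux.Tgen_coe]
    apply Filter.Eventually.of_forall
    intro i
    simp [sub_eq_add_neg]
end
end
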